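/- If γ is a sufficiently rich intersection context with no failures, P is an intersection protocol for γ, and agent i is at the front of its queue at a point (r,m) of I_{γ,P}, then for every incoming lane l ∈ L_in, either agent i knows that there exist an agent j and an outgoing lane l' with front_j ∧ lane_j = l ∧ intent_j = l', or agent i knows that no agent j has lane_j = l. -/

import Mathlib

open scoped Classical

noncomputable section

namespace Inter

/-- Actions available to each agent. -/
inductive Act where
  | go
  | noop
deriving DecidableEq

/-- A move through the intersection: an incoming lane paired with an outgoing lane. -/
abbrev Move (kin kout : ℕ) := Fin kin × Fin kout

/-- An adversary: a conflict-free arrival schedule, a transmission environment and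
transmitter/receiver failure functions. -/
structure Adversary (kin kout : ℕ) where
  arrive : ℕ → ℕ × Fin kin × Fin kout
  conflictFree : ∀ i j : ℕ, i ≠ j → (arrive i).1 = (arrive j).1 →
    (arrive i).2.1 ≠ (arrive j).2.1
  T : Set ((Fin kin × ℕ) × (Fin kin × ℕ))
  T_front : ∀ l l' : Fin kin, ((l, 0), (l', 0)) ∈ T
  Ft : ℕ → ℕ → Bool
  Fr : ℕ → ℕ → Bool

/-- The lane component of a sensor reading: an incoming lane, ⊥ (not yet arrived),
or ⊤ (departed). -/
inductive LaneStatus (kin : ℕ) where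
  | inLane (l : Fin kin)
  | notArrived
  | finished

/-- The minimal sensor reading: front, lane and intent. -/
structure Reading (kin kout : ℕ) where
  front : Prop
  lane : LaneStatus kin
  intent : Fin kout

/-- Environment states record the adversary, the time, a queue for each incoming lane
and the set of departed agents. -/
structure EnvState (kin kout : ℕ) where
  adv : Adversary kin kout
  time : ℕ
  queue : Fin kin → List ℕ
  done : Set ℕ

/-- Local states: a memory state together with a sensor reading
(the minimal reading plus possibly extra sensor information). -/
abbrev LState (kin kout : ℕ) (Mem Extra : Type*) := Mem × Reading kin kout × Extra

/-- Global states: an environment state and local states for all agents. -/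
abbrev GState (kin kout : ℕ) (Mem Extra : Type*) :=
  EnvState kin kout × (ℕ → LState kin kout Mem Extra)

/-- A run. -/
abbrev Run (kin kout : ℕ) (Mem Extra : Type*) := ℕ → GState kin kout Mem Extra

/-- An action protocol maps each agent's local state to an action. -/
abbrev Prot (kin kout : ℕ) (Mem Extra : Type*) := ℕ → LState kin kout Mem Extra → Act

variable {kin kout : ℕ} {Mem Extra Msg : Type*}

/-- Agent `i` is at the front of some queue. -/
def isFront (e : EnvState kin kout) (i : ℕ) : Prop :=
  ∃ l : Fin kin, (e.queue l).head? = some i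

/-- The (lane, position) of agent `i`, if it is in some queue. -/
def posAt (e : EnvState kin kout) (i : ℕ) : Option (Fin kin × ℕ) :=
  if h : ∃ l : Fin kin, i ∈ e.queue l then some (h.choose, (e.queue h.choose).idxOf i)
  else none

/-- The intended departure lane of agent `i`, as given by the arrival schedule. -/
def intentOf (e : EnvState kin kout) (i : ℕ) : Fin kout := (e.adv.arrive i).2.2

/-- The move `(lane_i, intent_i)` of agent `i`, if it is in some queue. -/
def moveAt (e : EnvState kin kout) (i : ℕ) : Option (Move kin kout) :=
  (posAt e i).map (fun p => (p.1, intentOf e i))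

/-- The minimal sensor reading of agent `i` in environment state `e`. -/
def minimalReading (e : EnvState kin kout) (i : ℕ) : Reading kin kout where
  front := isFront e i
  lane :=
    if h : ∃ l : Fin kin, i ∈ e.queue l then LaneStatus.inLane h.choose
    else if i ∈ e.done then LaneStatus.finished else LaneStatus.notArrived
  intent := intentOf e i

/-- An information-exchange protocol: initial memories, extra sensor information,
a message function and a memory-update function. -/
structure IEP (kin kout : ℕ) (Mem Extra Msg : Type*) where
  initMem : ℕ → Mem
  extra : EnvState kin kout → ℕ → Extra
  msg : ℕ → LState kin kout Mem Extra → Act → Reading kin kout × Extra → Option Msg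
  upd : ℕ → LState kin kout Mem Extra → Act → Set Msg → Mem

/-- One round of the system: agents act, queues are updated (dequeues for agents that go,
enqueues for new arrivals), new sensor readings are taken, messages are broadcast and
received subject to the transmission environment and the failure functions, and memories
are updated. -/
def step (E : IEP kin kout Mem Extra Msg) (P : Prot kin kout Mem Extra)
    (g : GState kin kout Mem Extra) : GState kin kout Mem Extra :=
  let e := g.1
  let act : ℕ → Act := fun i => P i (g.2 i)
  let q' : Fin kin → List ℕ := fun l =>
    let q1 := match (e.queue l).head? with
      | some i => if act i = Act.go then (e.queue l).tail else e.queue l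
      | none => e.queue l
    if h : ∃ i l', e.adv.arrive i = (e.time + 1, l, l') then q1 ++ [h.choose] else q1
  let done' : Set ℕ := e.done ∪ {i | isFront e i ∧ act i = Act.go}
  let e' : EnvState kin kout := ⟨e.adv, e.time + 1, q', done'⟩
  let sens : ℕ → Reading kin kout × Extra := fun i => (minimalReading e' i, E.extra e' i)
  let rcv : ℕ → Set Msg := fun i =>
    if e.adv.Fr e.time i = true ∧ (posAt e' i).isSome = true then
      {m | ∃ j pj pi, E.msg j (g.2 j) (act j) (sens j) = some m ∧
            e.adv.Ft e.time j = true ∧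
            posAt e' j = some pj ∧ posAt e' i = some pi ∧ (pj, pi) ∈ e.adv.T}
    else ∅
  (e', fun i => (E.upd i (g.2 i) (act i) (rcv i), sens i))

/-- An intersection context: an information-exchange protocol together with an
adversary model. -/
structure Ctx (kin kout : ℕ) (Mem Extra Msg : Type*) where
  iep : IEP kin kout Mem Extra Msg
  adv : Set (Adversary kin kout)

/-- Initial global states: time 0, empty queues, no departed agents, an adversary
from the adversary model, and initial local states. -/
def Init (C : Ctx kin kout Mem Extra Msg) (g : GState kin kout Mem Extra) : Prop :=
  g.1.adv ∈ C.adv ∧ g.1.time = 0 ∧ (∀ l, g.1.queue l = []) ∧ g.1.done = ∅ ∧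
  ∀ i, g.2 i = (C.iep.initMem i, minimalReading g.1 i, C.iep.extra g.1 i)

/-- The interpreted system `I_{γ,P}`: the set of runs of protocol `P` in context `γ`. -/
def Runs (C : Ctx kin kout Mem Extra Msg) (P : Prot kin kout Mem Extra) :
    Set (Run kin kout Mem Extra) :=
  {r | Init C (r 0) ∧ ∀ m, r (m + 1) = step C.iep P (r m)}

/-- `front_i` holds at the point `(r,m)`. -/
def frontAt (r : Run kin kout Mem Extra) (m i : ℕ) : Prop := isFront (r m).1 i

/-- `going_i` abbreviates `front_i ∧ ◯¬front_i`. -/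
def goingAt (r : Run kin kout Mem Extra) (m i : ℕ) : Prop :=
  frontAt r m i ∧ ¬ frontAt r (m + 1) i

/-- `GO(r,m)`: the set of agents that go through the intersection in round `m+1`. -/
def GOs (r : Run kin kout Mem Extra) (m : ℕ) : Set ℕ := {i | goingAt r m i}

/-- Validity: an agent goes through the intersection only from the front of its queue. -/
def ValidityP (C : Ctx kin kout Mem Extra Msg) (P : Prot kin kout Mem Extra) : Prop :=
  ∀ r ∈ Runs C P, ∀ m i, goingAt r m i → frontAt r m i

/-- Safety: agents that go simultaneously have compatible moves. -/
def SafetyP (O : Move kin kout → Move kin kout → Prop)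
    (C : Ctx kin kout Mem Extra Msg) (P : Prot kin kout Mem Extra) : Prop :=
  ∀ r ∈ Runs C P, ∀ m i j, i ≠ j → goingAt r m i → goingAt r m j →
    ∀ mi mj, moveAt (r m).1 i = some mi → moveAt (r m).1 j = some mj → O mi mj

/-- Liveness: every agent at the front of a queue eventually goes. -/
def LivenessP (C : Ctx kin kout Mem Extra Msg) (P : Prot kin kout Mem Extra) : Prop :=
  ∀ r ∈ Runs C P, ∀ m i, frontAt r m i → ∃ m' ≥ m, goingAt r m' i

/-- An intersection protocol: an action protocol satisfying Validity, Safety and Liveness. -/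
def IsIntersectionProtocol (O : Move kin kout → Move kin kout → Prop)
    (C : Ctx kin kout Mem Extra Msg) (P : Prot kin kout Mem Extra) : Prop :=
  ValidityP C P ∧ SafetyP O C P ∧ LivenessP C P

/-- `safe-to-go_i` at `(r,m)`: `i` is at the front of its queue (position 0) and the moves
of the agents in `GO(r,m) ∪ {i}` are pairwise compatible. -/
def safeToGo (O : Move kin kout → Move kin kout → Prop)
    (r : Run kin kout Mem Extra) (m i : ℕ) : Prop :=
  (∃ p, posAt (r m).1 i = some p ∧ p.2 = 0) ∧
  ∀ j ∈ GOs r m ∪ {i}, ∀ k ∈ GOs r m ∪ {i}, j ≠ k →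
    ∀ mj mk, moveAt (r m).1 j = some mj → moveAt (r m).1 k = some mk → O mj mk

/-- `P` has unnecessary waiting with respect to `γ`. -/
def UnnecessaryWaiting (O : Move kin kout → Move kin kout → Prop)
    (C : Ctx kin kout Mem Extra Msg) (P : Prot kin kout Mem Extra) : Prop :=
  ∃ r ∈ Runs C P, ∃ m i, safeToGo O r m i ∧ i ∉ GOs r m

/-- The time at which agent `i` goes through the intersection in run `r` (∞ if never). -/
def gotime (r : Run kin kout Mem Extra) (i : ℕ) : ℕ∞ :=
  sInf {n : ℕ∞ | ∃ m : ℕ, goingAt r m i ∧ n = (m : ℕ∞)}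

/-- `P` dominates `P'`: on all corresponding runs, every agent goes at least as early. -/
def Dominates (C : Ctx kin kout Mem Extra Msg) (P P' : Prot kin kout Mem Extra) : Prop :=
  ∀ r ∈ Runs C P, ∀ r' ∈ Runs C P', r 0 = r' 0 → ∀ i, gotime r i ≤ gotime r' i

def StrictDominates (C : Ctx kin kout Mem Extra Msg) (P P' : Prot kin kout Mem Extra) : Prop :=
  Dominates C P P' ∧ ¬ Dominates C P' P

/-- `P` is optimal: no intersection protocol strictly dominates it. -/
def Optimal (O : Move kin kout → Move kin kout → Prop)
    (C : Ctx kin kout Mem Extra Msg) (P : Prot kin kout Mem Extra) : Prop :=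
  ¬ ∃ P' : Prot kin kout Mem Extra,
      IsIntersectionProtocol O C P' ∧ StrictDominates C P' P

/-- `P` lexicographically dominates `P'`. -/
def LexDominates (C : Ctx kin kout Mem Extra Msg) (P P' : Prot kin kout Mem Extra) : Prop :=
  ∀ r ∈ Runs C P, ∀ r' ∈ Runs C P', r 0 = r' 0 →
    (∀ m, GOs r m = GOs r' m) ∨
    ∃ m, (∀ k < m, GOs r k = GOs r' k) ∧ GOs r m ≠ GOs r' m ∧ GOs r' m ⊂ GOs r m

def StrictLexDominates (C : Ctx kin kout Mem Extra Msg) (P P' : Prot kin kout Mem Extra) :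
    Prop :=
  LexDominates C P P' ∧ ¬ LexDominates C P' P

/-- `P` is lexicographically optimal: no intersection protocol strictly lexicographically
dominates it. -/
def LexOptimal (O : Move kin kout → Move kin kout → Prop)
    (C : Ctx kin kout Mem Extra Msg) (P : Prot kin kout Mem Extra) : Prop :=
  ¬ ∃ P' : Prot kin kout Mem Extra,
      IsIntersectionProtocol O C P' ∧ StrictLexDominates C P' P

/-- Knowledge: `K_i φ` holds at `(r,m)` iff `φ` holds at all points of the system where
agent `i` has the same local state. -/
def Kn (S : Set (Run kin kout Mem Extra)) (i : ℕ)
    (φ : Run kin kout Mem Extra → ℕ → Prop) (r : Run kin kout Mem Extra) (m : ℕ) : Prop :=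
  ∀ r' ∈ S, ∀ m', (r' m').2 i = (r m).2 i → φ r' m'

/-- The adversary model has no failures. -/
def NoFailures (C : Ctx kin kout Mem Extra Msg) : Prop :=
  ∀ α ∈ C.adv, ∀ k i, α.Ft k i = true ∧ α.Fr k i = true

/-- Full information exchange: every agent broadcasts (an injective encoding of) its
entire local state in every round, and records every broadcast it receives. -/
def FullInfo (C : Ctx kin kout Mem Extra Msg) : Prop :=
  (∃ enc : LState kin kout Mem Extra → Msg, Function.Injective enc ∧
      ∀ i s a o, C.iep.msg i s a o = some (enc s)) ∧
  (∀ i s a, Function.Injective fun B : Set Msg => C.iep.upd i s a B)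

/-- A sufficiently rich context: every agent that will be at the front of some lane
broadcasts a message encoding its lane and intent, tagged as coming from the front;
no other message is tagged as a front message; and each agent records the
(lane, intent) pair of each front agent it hears from. -/
def SufficientlyRich (C : Ctx kin kout Mem Extra Msg) : Prop :=
  ∃ dec : Msg → Option (Move kin kout),
    (∀ i s a (o : Reading kin kout × Extra) (l : Fin kin),
        o.1.front → o.1.lane = LaneStatus.inLane l →
        ∃ msg, C.iep.msg i s a o = some msg ∧ dec msg = some (l, o.1.intent)) ∧
    (∀ i s a (o : Reading kin kout × Extra), ¬ o.1.front →
        ∀ msg, C.iep.msg i s a o = some msg → dec msg = none) ∧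
    (∃ rec : Mem → Set (Move kin kout),
        ∀ i s a B, rec (C.iep.upd i s a B) = {mv | ∃ msg ∈ B, dec msg = some mv})

/-- The set of agents at the front of a queue. -/
def FrontSet (e : EnvState kin kout) : Set ℕ := {i | isFront e i}

/-- `P` depends only on the agents at the front of their queues. -/
def DependsOnlyOnFront (C : Ctx kin kout Mem Extra Msg) (P : Prot kin kout Mem Extra) :
    Prop :=
  ∀ r ∈ Runs C P, ∀ r' ∈ Runs C P, ∀ m m' i,
    FrontSet (r m).1 = FrontSet (r' m').1 → P i ((r m).2 i) = P i ((r' m').2 i)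

/-- The choices of an adversary in a single round: arrivals, the transmission
environment and the failure values. -/
structure Choice (kin kout : ℕ) where
  arrivals : Set (ℕ × Fin kin × Fin kout)
  T : Set ((Fin kin × ℕ) × (Fin kin × ℕ))
  Ft : ℕ → Bool
  Fr : ℕ → Bool

/-- The choices of adversary `α` in round `m+1`. -/
def choiceAt (α : Adversary kin kout) (m : ℕ) : Choice kin kout where
  arrivals := {p | α.arrive p.1 = (m + 1, p.2.1, p.2.2)}
  T := α.T
  Ft := fun i => α.Ft m i
  Fr := fun i => α.Fr m i

/-- The adversary history `H(α,m) = ⟨α_0, …, α_{m-1}⟩`. -/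
def hist (α : Adversary kin kout) (m : ℕ) : List (Choice kin kout) :=
  (List.range m).map (choiceAt α)

/-- The adversary history of run `r` up to time `m`. -/
def histOf (r : Run kin kout Mem Extra) (m : ℕ) : List (Choice kin kout) :=
  hist (r 0).1.adv m

/-- An intersection policy: a map from adversary histories to sets of permitted moves. -/
abbrev Policy (kin kout : ℕ) := List (Choice kin kout) → Set (Move kin kout)

/-- The set `H_γ` of adversary histories of the context. -/
def Hists (C : Ctx kin kout Mem Extra Msg) : Set (List (Choice kin kout)) :=
  {h | ∃ α ∈ C.adv, ∃ m, h = hist α m}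

/-- A feasible infinite sequence of histories: one arising from a single adversary. -/
def Feasible (F : Set (Adversary kin kout)) (h : ℕ → List (Choice kin kout)) : Prop :=
  ∃ α ∈ F, ∀ m, h m = hist α m

/-- Conflict-freedom of an intersection policy. -/
def ConflictFree (O : Move kin kout → Move kin kout → Prop)
    (C : Ctx kin kout Mem Extra Msg) (σ : Policy kin kout) : Prop :=
  ∀ h ∈ Hists C, ∀ mv ∈ σ h, ∀ mv' ∈ σ h, mv ≠ mv' → O mv mv'

/-- Fairness of an intersection policy. -/
def FairPolicy (C : Ctx kin kout Mem Extra Msg) (σ : Policy kin kout) : Prop :=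
  ∀ h : ℕ → List (Choice kin kout), Feasible C.adv h →
    ∀ mv : Move kin kout, ∀ m, ∃ m' ≥ m, mv ∈ σ (h m')

/-- A correct intersection policy: conflict-free and fair. -/
def CorrectPolicy (O : Move kin kout → Move kin kout → Prop)
    (C : Ctx kin kout Mem Extra Msg) (σ : Policy kin kout) : Prop :=
  ConflictFree O C σ ∧ FairPolicy C σ

/-- A synchronous context: the time is encoded in each agent's local state. -/
def Synchronous (C : Ctx kin kout Mem Extra Msg) : Prop :=
  ∃ clock : LState kin kout Mem Extra → ℕ,
    ∀ P : Prot kin kout Mem Extra, ∀ r ∈ Runs C P, ∀ m i, clock ((r m).2 i) = m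

/-- The knowledge condition of the knowledge-based program `P^σ`:
`front_i ∧ (lane_i, intent_i) ∈ σ`. -/
def phiSigma (σ : Policy kin kout) (i : ℕ) (r : Run kin kout Mem Extra) (m : ℕ) : Prop :=
  frontAt r m i ∧ ∃ mv, moveAt (r m).1 i = some mv ∧ mv ∈ σ (histOf r m)

/-- `P` implements the knowledge-based program `if K_i φ_i then go else noop` in `γ`. -/
def Implements (C : Ctx kin kout Mem Extra Msg) (P : Prot kin kout Mem Extra)
    (φ : ℕ → Run kin kout Mem Extra → ℕ → Prop) : Prop :=
  ∀ r ∈ Runs C P, ∀ m i, (P i ((r m).2 i) = Act.go ↔ Kn (Runs C P) i (φ i) r m)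

/-- Behavioral equivalence: the protocols take the same actions at all reachable states. -/
def BehEq (C : Ctx kin kout Mem Extra Msg) (P P' : Prot kin kout Mem Extra) : Prop :=
  (∀ r ∈ Runs C P, ∀ m i, P i ((r m).2 i) = P' i ((r m).2 i)) ∧
  (∀ r ∈ Runs C P', ∀ m i, P i ((r m).2 i) = P' i ((r m).2 i))

/-- `γ` is `σ`-aware. -/
def SigmaAware (C : Ctx kin kout Mem Extra Msg) (σ : Policy kin kout) : Prop :=
  ∀ P : Prot kin kout Mem Extra, ∀ r ∈ Runs C P, ∀ m i (l : Fin kin) (l' : Fin kout),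
    (l, l') ∈ σ (histOf r m) → i ∈ (r m).1.queue l →
    Kn (Runs C P) i (fun r' m' => (l, l') ∈ σ (histOf r' m')) r m

/-- `γ` is `next`-aware. -/
def NextAware (C : Ctx kin kout Mem Extra Msg)
    (next : List (Choice kin kout) → Fin kin) : Prop :=
  ∀ P : Prot kin kout Mem Extra, ∀ r ∈ Runs C P, ∀ m i (l : Fin kin),
    next (histOf r m) = l →
    Kn (Runs C P) i (fun r' m' => next (histOf r' m') = l) r m

/-- Cyclic distance from `a` to `b` (mod `kin`). -/
def distC (a b : Fin kin) : ℕ := (b.val + kin - a.val) % kin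

/-- `l` lies in the cyclic interval `[a, b)` of incoming lanes. -/
def inCyc (a b l : Fin kin) : Prop := distC a l < distC a b

/-- `mv` is compatible with every move in `S`. -/
def compatAll (O : Move kin kout → Move kin kout → Prop)
    (S : Set (Move kin kout)) (mv : Move kin kout) : Prop :=
  ∀ mv' ∈ S, O mv mv'

/-- The proposition `V_i` of the knowledge-based program `𝐏`. -/
def Vprop (O : Move kin kout → Move kin kout → Prop) (σ : Policy kin kout)
    (next : List (Choice kin kout) → Fin kin) (i : ℕ)
    (r : Run kin kout Mem Extra) (m : ℕ) : Prop :=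
  ∃ mv, moveAt (r m).1 i = some mv ∧ mv ∉ σ (histOf r m) ∧
    (∀ j mj, goingAt r m j → moveAt (r m).1 j = some mj →
        mj ∈ σ (histOf r m) → O mv mj) ∧
    (∀ j mj, j ≠ i → goingAt r m j → moveAt (r m).1 j = some mj →
        mj ∉ σ (histOf r m) → inCyc (next (histOf r m)) mv.1 mj.1 → O mv mj)

/-- The knowledge condition of the knowledge-based program `𝐏`:
`front_i ∧ ((lane_i, intent_i) ∈ σ ∨ V_i)`. -/
def phiP (O : Move kin kout → Move kin kout → Prop) (σ : Policy kin kout)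
    (next : List (Choice kin kout) → Fin kin) (i : ℕ)
    (r : Run kin kout Mem Extra) (m : ℕ) : Prop :=
  frontAt r m i ∧
    ((∃ mv, moveAt (r m).1 i = some mv ∧ mv ∈ σ (histOf r m)) ∨ Vprop O σ next i r m)

/-- Fairness of a `next` function. -/
def FairNext (C : Ctx kin kout Mem Extra Msg)
    (next : List (Choice kin kout) → Fin kin) : Prop :=
  ∀ h : ℕ → List (Choice kin kout), Feasible C.adv h →
    ∀ m (l : Fin kin), ∃ m' ≥ m, next (h m') = l

/-- Fairness of a pair `(σ, next)`. -/
def PairFair (O : Move kin kout → Move kin kout → Prop)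
    (C : Ctx kin kout Mem Extra Msg) (σ : Policy kin kout)
    (next : List (Choice kin kout) → Fin kin) : Prop :=
  ∀ h : ℕ → List (Choice kin kout), Feasible C.adv h →
    ∀ m (mv : Move kin kout), ∃ m' ≥ m,
      mv ∈ σ (h m') ∨ (next (h m') = mv.1 ∧ compatAll O (σ (h m')) mv)

/-- `next(h) = |h| mod |L_in|` at time `t`. -/
def nextL (hkin : 0 < kin) (t : ℕ) : Fin kin := ⟨t % kin, Nat.mod_lt _ hkin⟩

/-- The stages of the construction of the set `Pos_i`, starting from the lane `nxt` and
proceeding in cyclic order; `M` is the set of moves received from front agents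
(empty when there is no communication). -/
def posStage (hkin : 0 < kin) (O : Move kin kout → Move kin kout → Prop)
    (M : Set (Move kin kout)) (nxt : Fin kin) : ℕ → Set (Move kin kout)
  | 0 => ∅
  | t + 1 =>
    let S := posStage hkin O M nxt t
    let l : Fin kin := ⟨(nxt.val + t) % kin, Nat.mod_lt _ hkin⟩
    if ∃ l' : Fin kout, (l, l') ∈ M then
      S ∪ {mv | mv.1 = l ∧ mv ∈ M ∧ compatAll O S mv}
    else
      S ∪ {mv | mv.1 = l ∧ compatAll O S mv}

/-- The set `Pos_i` computed from the received moves `M`, the lane `nxt = next` and the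
agent's own lane `lanei`. -/
def PosSet (hkin : 0 < kin) (O : Move kin kout → Move kin kout → Prop)
    (M : Set (Move kin kout)) (nxt lanei : Fin kin) : Set (Move kin kout) :=
  posStage hkin O M nxt (distC nxt lanei)

/-- The stage `Pos_i^l` of the construction of `Pos_i`, for a lane `l` in the cyclic
interval `[nxt, lane_i)`. -/
def PosUpTo (hkin : 0 < kin) (O : Move kin kout → Move kin kout → Prop)
    (M : Set (Move kin kout)) (nxt l : Fin kin) : Set (Move kin kout) :=
  posStage hkin O M nxt (distC nxt l + 1)

/-- The adversary model with no failures. -/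
def NFadv (kin kout : ℕ) : Set (Adversary kin kout) :=
  {α | ∀ k i, α.Ft k i = true ∧ α.Fr k i = true}

/-- The adversary model with crash failures. -/
def CRadv (kin kout : ℕ) : Set (Adversary kin kout) :=
  {α | (∀ k i, α.Fr k i = true) ∧
    ∀ k i, α.Ft k i = false → ∀ k', k < k' → α.Ft k' i = false}

/-- The adversary model with sending omissions. -/
def SOadv (kin kout : ℕ) : Set (Adversary kin kout) :=
  {α | ∀ k i, α.Fr k i = true}

/-- The information-exchange protocol of `γ_∅`: a single memory state, no messages,
and sensor readings `⟨front_i, lane_i, intent_i, time_i⟩`. -/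
def E0 (kin kout : ℕ) : IEP kin kout Unit ℕ Empty where
  initMem _ := ()
  extra e _ := e.time
  msg _ _ _ _ := none
  upd _ _ _ _ := ()

/-- The context `γ_∅(F)`. -/
def gammaEmpty (kin kout : ℕ) (F : Set (Adversary kin kout)) : Ctx kin kout Unit ℕ Empty :=
  ⟨E0 kin kout, F⟩

/-- The protocol `P^∅`: go iff at the front and own move compatible with `Pos_i`. -/
def Pempty (hkin : 0 < kin) (O : Move kin kout → Move kin kout → Prop) :
    Prot kin kout Unit ℕ := fun _ s =>
  match s.2.1.lane with
  | LaneStatus.inLane l =>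
      if s.2.1.front ∧ compatAll O (PosSet hkin O ∅ (nextL hkin s.2.2) l) (l, s.2.1.intent)
      then Act.go else Act.noop
  | _ => Act.noop

/-- The information-exchange protocol of `γ_intent`: exactly the agents at the front of a
lane broadcast `(lane_i, intent_i)`; the memory is the set of moves received in the
current round; sensor readings are `⟨front_i, lane_i, intent_i, time_i⟩`. -/
def Eintent (kin kout : ℕ) : IEP kin kout (Set (Move kin kout)) ℕ (Move kin kout) where
  initMem _ := ∅
  extra e _ := e.time
  msg _ _ _ o :=
    if o.1.front then
      match o.1.lane with
      | LaneStatus.inLane l => some (l, o.1.intent)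
      | _ => none
    else none
  upd _ _ _ B := B

/-- The context `γ_intent(F)`. -/
def gammaIntent (kin kout : ℕ) (F : Set (Adversary kin kout)) :
    Ctx kin kout (Set (Move kin kout)) ℕ (Move kin kout) :=
  ⟨Eintent kin kout, F⟩

/-- The protocol `P^intent`: go iff at the front and own move compatible with `Pos_i`
computed from the received moves. -/
def Pintent (hkin : 0 < kin) (O : Move kin kout → Move kin kout → Prop) :
    Prot kin kout (Set (Move kin kout)) ℕ := fun _ s =>
  match s.2.1.lane with
  | LaneStatus.inLane l =>
      if s.2.1.front ∧
          compatAll O (PosSet hkin O s.1 (nextL hkin s.2.2) l) (l, s.2.1.intent)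
      then Act.go else Act.noop
  | _ => Act.noop

end Inter

open Inter


namespace Aux4

variable {kin kout : ℕ} {Mem Extra Msg : Type*}

/-- Invariant: every queued agent's scheduled lane matches the queue it is in. -/
def Inv (e : EnvState kin kout) : Prop :=
  ∀ j l, j ∈ e.queue l → (e.adv.arrive j).2.1 = l

lemma step_fst_adv (E : IEP kin kout Mem Extra Msg) (P : Prot kin kout Mem Extra)
    (g : GState kin kout Mem Extra) : (step E P g).1.adv = g.1.adv := rfl

lemma step_fst_queue (E : IEP kin kout Mem Extra Msg) (P : Prot kin kout Mem Extra)
    (g : GState kin kout Mem Extra) (l : Fin kin) :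
    (step E P g).1.queue l =
      (let q1 := match (g.1.queue l).head? with
        | some i => if P i (g.2 i) = Act.go then (g.1.queue l).tail else g.1.queue l
        | none => g.1.queue l
      if h : ∃ i l', g.1.adv.arrive i = (g.1.time + 1, l, l') then q1 ++ [h.choose]
      else q1) := rfl

lemma step_snd (E : IEP kin kout Mem Extra Msg) (P : Prot kin kout Mem Extra)
    (g : GState kin kout Mem Extra) (i : ℕ) :
    (step E P g).2 i =
      (E.upd i (g.2 i) (P i (g.2 i))
        (if g.1.adv.Fr g.1.time i = true ∧ (posAt (step E P g).1 i).isSome = true then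
          {m | ∃ j pj pi,
            E.msg j (g.2 j) (P j (g.2 j))
              (minimalReading (step E P g).1 j, E.extra (step E P g).1 j) = some m ∧
            g.1.adv.Ft g.1.time j = true ∧
            posAt (step E P g).1 j = some pj ∧ posAt (step E P g).1 i = some pi ∧
            (pj, pi) ∈ g.1.adv.T}
        else ∅),
       minimalReading (step E P g).1 i, E.extra (step E P g).1 i) := rfl

lemma runs_adv {C : Ctx kin kout Mem Extra Msg} {P : Prot kin kout Mem Extra}
    {r : Run kin kout Mem Extra} (hr : r ∈ Runs C P) : ∀ m, (r m).1.adv ∈ C.adv := by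
  intro m
  induction m with
  | zero => exact hr.1.1
  | succ n ih => rw [hr.2 n, step_fst_adv]; exact ih

lemma mem_step_queue {E : IEP kin kout Mem Extra Msg} {P : Prot kin kout Mem Extra}
    {g : GState kin kout Mem Extra} {l : Fin kin} {j : ℕ}
    (hj : j ∈ (step E P g).1.queue l) :
    j ∈ g.1.queue l ∨ (g.1.adv.arrive j).2.1 = l := by
  rw [step_fst_queue] at hj
  dsimp only at hj
  have hq1 : ∀ x, x ∈ (match (g.1.queue l).head? with
      | some i => if P i (g.2 i) = Act.go then (g.1.queue l).tail else g.1.queue l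
      | none => g.1.queue l) → x ∈ g.1.queue l := by
    intro x hx
    rcases h : (g.1.queue l).head? with _ | a
    · rwa [h] at hx
    · rw [h] at hx
      dsimp only at hx
      by_cases hgo : P a (g.2 a) = Act.go
      · rw [if_pos hgo] at hx; exact List.mem_of_mem_tail hx
      · rwa [if_neg hgo] at hx
  by_cases h : ∃ i l', g.1.adv.arrive i = (g.1.time + 1, l, l')
  · rw [dif_pos h] at hj
    rcases List.mem_append.1 hj with hj | hj
    · exact Or.inl (hq1 _ hj)
    · right
      have hj' : j = h.choose := by simpa using hj
      obtain ⟨l', hl'⟩ := h.choose_spec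
      rw [hj', hl']
  · rw [dif_neg h] at hj
    exact Or.inl (hq1 _ hj)

lemma runs_inv {C : Ctx kin kout Mem Extra Msg} {P : Prot kin kout Mem Extra}
    {r : Run kin kout Mem Extra} (hr : r ∈ Runs C P) : ∀ m, Inv (r m).1 := by
  intro m
  induction m with
  | zero =>
    intro j l hj
    rw [hr.1.2.2.1 l] at hj
    simp at hj
  | succ n ih =>
    intro j l hj
    rw [hr.2 n] at hj
    rw [hr.2 n, step_fst_adv]
    rcases mem_step_queue hj with h | h
    · exact ih j l h
    · exact h

lemma runs_reading {C : Ctx kin kout Mem Extra Msg} {P : Prot kin kout Mem Extra}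
    {r : Run kin kout Mem Extra} (hr : r ∈ Runs C P) (m i : ℕ) :
    ((r m).2 i).2.1 = minimalReading (r m).1 i := by
  cases m with
  | zero => rw [hr.1.2.2.2.2 i]
  | succ n => rw [hr.2 n, step_snd]

lemma head_mem {j : ℕ} {q : List ℕ} (h : q.head? = some j) : j ∈ q := by
  cases q with
  | nil => simp at h
  | cons a t => simp only [List.head?_cons, Option.some.injEq] at h; rw [h]; exact List.mem_cons_self

lemma choose_eq {e : EnvState kin kout} (he : Inv e) {j : ℕ} {l : Fin kin}
    (hmem : j ∈ e.queue l) (hex : ∃ l0 : Fin kin, j ∈ e.queue l0) : hex.choose = l := by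
  rw [← he j hex.choose hex.choose_spec, he j l hmem]

lemma front_pos {e : EnvState kin kout} (he : Inv e) {j : ℕ} {l : Fin kin}
    (hj : (e.queue l).head? = some j) : posAt e j = some (l, 0) := by
  have hmem : j ∈ e.queue l := head_mem hj
  have hex : ∃ l0 : Fin kin, j ∈ e.queue l0 := ⟨l, hmem⟩
  rw [posAt, dif_pos hex, choose_eq he hmem hex]
  cases hq : e.queue l with
  | nil => rw [hq] at hj; simp at hj
  | cons a t =>
    rw [hq] at hj
    simp only [List.head?_cons, Option.some.injEq] at hj
    rw [hj]
    simp [hq]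

lemma front_lane {e : EnvState kin kout} (he : Inv e) {j : ℕ} {l : Fin kin}
    (hj : (e.queue l).head? = some j) :
    (minimalReading e j).lane = LaneStatus.inLane l := by
  have hmem : j ∈ e.queue l := head_mem hj
  have hex : ∃ l0 : Fin kin, j ∈ e.queue l0 := ⟨l, hmem⟩
  simp only [minimalReading]
  rw [dif_pos hex, choose_eq he hmem hex]

lemma front_succ {C : Ctx kin kout Mem Extra Msg} {P : Prot kin kout Mem Extra}
    {r : Run kin kout Mem Extra} (hr : r ∈ Runs C P) {m i : ℕ}
    (hf : isFront (r m).1 i) : ∃ n, m = n + 1 := by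
  cases m with
  | zero =>
    obtain ⟨l, hl⟩ := hf
    rw [hr.1.2.2.1 l] at hl
    simp at hl
  | succ n => exact ⟨n, rfl⟩

lemma recSet_eq {C : Ctx kin kout Mem Extra Msg} {P : Prot kin kout Mem Extra}
    {dec : Msg → Option (Move kin kout)} {rec : Mem → Set (Move kin kout)}
    (h1 : ∀ i s a (o : Reading kin kout × Extra) (l : Fin kin),
        o.1.front → o.1.lane = LaneStatus.inLane l →
        ∃ msg, C.iep.msg i s a o = some msg ∧ dec msg = some (l, o.1.intent))
    (h2 : ∀ i s a (o : Reading kin kout × Extra), ¬ o.1.front →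
        ∀ msg, C.iep.msg i s a o = some msg → dec msg = none)
    (h3 : ∀ i s a B, rec (C.iep.upd i s a B) = {mv | ∃ msg ∈ B, dec msg = some mv})
    (hnf : NoFailures C)
    {r : Run kin kout Mem Extra} (hr : r ∈ Runs C P) (n i : ℕ)
    (hfi : isFront (r (n + 1)).1 i) :
    rec (((r (n + 1)).2 i).1) =
      {mv : Move kin kout | ∃ j, ((r (n + 1)).1.queue mv.1).head? = some j ∧
        intentOf (r (n + 1)).1 j = mv.2} := by
  have hstep : r (n + 1) = step C.iep P (r n) := hr.2 n
  have hinv : Inv (r (n + 1)).1 := runs_inv hr (n + 1)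
  have hadv : (r n).1.adv ∈ C.adv := runs_adv hr n
  rw [hstep] at hfi hinv ⊢
  obtain ⟨li, hli⟩ := hfi
  have hiPos : posAt (step C.iep P (r n)).1 i = some (li, 0) := front_pos hinv hli
  have hcond : (r n).1.adv.Fr (r n).1.time i = true ∧
      (posAt (step C.iep P (r n)).1 i).isSome = true := by
    refine ⟨(hnf _ hadv _ _).2, ?_⟩
    rw [hiPos]; rfl
  rw [step_snd, h3, if_pos hcond]
  ext mv
  constructor
  · rintro ⟨msg, ⟨j, pj, pi', hmsg, hFt, hpj, hpi, hT⟩, hdec⟩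
    by_cases hfj : isFront (step C.iep P (r n)).1 j
    · obtain ⟨lj, hlj⟩ := hfj
      have hlane := front_lane hinv hlj
      obtain ⟨msg0, hmsg0, hdec0⟩ := h1 j ((r n).2 j) (P j ((r n).2 j))
        (minimalReading (step C.iep P (r n)).1 j,
          C.iep.extra (step C.iep P (r n)).1 j) lj ⟨lj, hlj⟩ hlane
      have hm : msg0 = msg := Option.some.inj (hmsg0.symm.trans hmsg)
      rw [hm, hdec] at hdec0
      have hmv : mv = (lj, intentOf (step C.iep P (r n)).1 j) :=
        Option.some.inj hdec0
      rw [hmv]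
      exact ⟨j, hlj, rfl⟩
    · have := h2 j ((r n).2 j) (P j ((r n).2 j))
        (minimalReading (step C.iep P (r n)).1 j,
          C.iep.extra (step C.iep P (r n)).1 j) hfj msg hmsg
      rw [this] at hdec
      exact absurd hdec (by simp)
  · rintro ⟨j, hj, hint⟩
    have hfj : isFront (step C.iep P (r n)).1 j := ⟨mv.1, hj⟩
    have hlane := front_lane hinv hj
    obtain ⟨msg0, hmsg0, hdec0⟩ := h1 j ((r n).2 j) (P j ((r n).2 j))
      (minimalReading (step C.iep P (r n)).1 j,
        C.iep.extra (step C.iep P (r n)).1 j) mv.1 hfj hlane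
    refine ⟨msg0, ⟨j, (mv.1, 0), (li, 0), hmsg0, (hnf _ hadv _ _).1,
      front_pos hinv hj, hiPos, (r n).1.adv.T_front mv.1 li⟩, ?_⟩
    have : (minimalReading (step C.iep P (r n)).1 j).intent = mv.2 := hint
    rw [this] at hdec0
    rw [hdec0]

end Aux4

/-- In a sufficiently rich intersection context with no failures, an agent at
the front of its queue knows, for each incoming lane `l`, either that some agent `j` with
some intent `l'` is at the front of lane `l`, or that no agent is in lane `l`. -/
theorem front_agent_knows_lanes
    {kin kout : ℕ} {Mem Extra Msg : Type*}
    (O : Move kin kout → Move kin kout → Prop)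
    (hO : ∀ a b, O a b → O b a)
    (C : Ctx kin kout Mem Extra Msg) (P : Prot kin kout Mem Extra)
    (hrich : SufficientlyRich C) (hnf : NoFailures C)
    (hP : IsIntersectionProtocol O C P)
    (r : Run kin kout Mem Extra) (hr : r ∈ Runs C P) (m i : ℕ)
    (hfront : frontAt r m i) :
    ∀ l : Fin kin,
      Kn (Runs C P) i
        (fun r' m' => ∃ (j : ℕ) (l' : Fin kout),
          frontAt r' m' j ∧ j ∈ (r' m').1.queue l ∧ intentOf (r' m').1 j = l') r m ∨
      Kn (Runs C P) i (fun r' m' => ∀ j : ℕ, j ∉ (r' m').1.queue l) r m := by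
  intro l
  obtain ⟨dec, h1, h2, rec, h3⟩ := hrich
  obtain ⟨n, rfl⟩ := Aux4.front_succ hr hfront
  have hM := Aux4.recSet_eq h1 h2 h3 hnf hr n i hfront
  have key : ∀ r' ∈ Runs C P, ∀ m', (r' m').2 i = (r (n + 1)).2 i →
      ∃ n', m' = n' + 1 ∧
        rec (((r' m').2 i).1) =
          {mv : Move kin kout | ∃ j, ((r' m').1.queue mv.1).head? = some j ∧
            intentOf (r' m').1 j = mv.2} := by
    intro r' hr' m' hloc
    have hmr : minimalReading (r' m').1 i = minimalReading (r (n + 1)).1 i := by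
      rw [← Aux4.runs_reading hr' m' i, ← Aux4.runs_reading hr (n + 1) i, hloc]
    have hfeq : (minimalReading (r' m').1 i).front
        = (minimalReading (r (n + 1)).1 i).front := congrArg Reading.front hmr
    have hfront' : isFront (r' m').1 i := by
      show (minimalReading (r' m').1 i).front
      rw [hfeq]
      exact hfront
    obtain ⟨n', rfl⟩ := Aux4.front_succ hr' hfront'
    exact ⟨n', rfl, Aux4.recSet_eq h1 h2 h3 hnf hr' n' i hfront'⟩
  by_cases hl : ∃ j, ((r (n + 1)).1.queue l).head? = some j
  · left
    obtain ⟨j0, hj0⟩ := hl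
    intro r' hr' m' hloc
    obtain ⟨n', rfl, hM'⟩ := key r' hr' m' hloc
    have hmem : (l, intentOf (r (n + 1)).1 j0) ∈ rec (((r (n + 1)).2 i).1) := by
      rw [hM]; exact ⟨j0, hj0, rfl⟩
    rw [← congrArg Prod.fst hloc, hM'] at hmem
    obtain ⟨j, hjh, hji⟩ := hmem
    exact ⟨j, intentOf (r' (n' + 1)).1 j, ⟨l, hjh⟩, Aux4.head_mem hjh, rfl⟩
  · right
    intro r' hr' m' hloc j hj
    obtain ⟨n', rfl, hM'⟩ := key r' hr' m' hloc
    have hne : (r' (n' + 1)).1.queue l ≠ [] := by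
      intro h
      rw [h] at hj
      simp at hj
    obtain ⟨j0, hj0⟩ : ∃ j0, ((r' (n' + 1)).1.queue l).head? = some j0 :=
      Option.ne_none_iff_exists'.mp (fun h => hne (List.head?_eq_none_iff.mp h))
    have hmem : (l, intentOf (r' (n' + 1)).1 j0) ∈ rec (((r' (n' + 1)).2 i).1) := by
      rw [hM']; exact ⟨j0, hj0, rfl⟩
    rw [congrArg Prod.fst hloc, hM] at hmem
    obtain ⟨j1, hj1, _⟩ := hmem
    exact hl ⟨j1, hj1⟩
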